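/- Second-order expansion of the element-to-target distance: for a target at distance r > 0 and angle θ from a centered array, and an element offset x along the array axis with |x| < r, the exact distance √(r² − 2 r x sinθ + x²) satisfies |√(r² − 2 r x sinθ + x²) − (r − x sinθ + x² cos²θ/(2r))| ≤ C·|x|³/r² for some constant C independent of x (uniformly for |x| ≤ r/2). -/
import Mathlib


set_option maxHeartbeats 1600000 in
theorem fresnel_second_order_expansion (r θ : ℝ) (hr : 0 < r) :
    ∃ C > 0, ∀ x : ℝ, |x| ≤ r / 2 →
      |Real.sqrt (r ^ 2 - 2 * r * x * Real.sin θ + x ^ 2)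
        - (r - x * Real.sin θ + x ^ 2 * (1 - Real.sin θ ^ 2) / (2 * r))|
        ≤ C * |x| ^ 3 / r ^ 2 := by
  refine ⟨2, by norm_num, fun x hx => ?_⟩
  set s := Real.sin θ with hsdef
  have hs1 : s ^ 2 ≤ 1 := Real.sin_sq_le_one θ
  have hs : |s| ≤ 1 := abs_le_one_iff_mul_self_le_one.mpr (by nlinarith)
  have hxs : x * s ≤ |x| := by
    calc x * s ≤ |x * s| := le_abs_self _
    _ = |x| * |s| := abs_mul _ _
    _ ≤ |x| * 1 := by nlinarith [abs_nonneg x]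
    _ = |x| := by ring
  have hxs' : -(x * s) ≤ |x| := by
    calc -(x * s) ≤ |x * s| := neg_le_abs _
    _ = |x| * |s| := abs_mul _ _
    _ ≤ |x| * 1 := by nlinarith [abs_nonneg x]
    _ = |x| := by ring
  have hxx : x ^ 2 = |x| ^ 2 := (sq_abs x).symm
  have harg : (r / 2) ^ 2 ≤ r ^ 2 - 2 * r * x * s + x ^ 2 := by
    nlinarith [abs_nonneg x, sq_nonneg (r - |x|)]
  have hargnn : 0 ≤ r ^ 2 - 2 * r * x * s + x ^ 2 := le_trans (by positivity) harg
  set g := Real.sqrt (r ^ 2 - 2 * r * x * s + x ^ 2) with hgdef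
  set p := r - x * s + x ^ 2 * (1 - s ^ 2) / (2 * r) with hpdef
  have hg2 : g ^ 2 = r ^ 2 - 2 * r * x * s + x ^ 2 := Real.sq_sqrt hargnn
  have hg : r / 2 ≤ g := by
    nlinarith [Real.sqrt_nonneg (r ^ 2 - 2 * r * x * s + x ^ 2), hg2]
  have hp : r / 2 ≤ p := by
    have h1 : 0 ≤ x ^ 2 * (1 - s ^ 2) / (2 * r) := by
      apply div_nonneg
      · nlinarith [sq_nonneg x]
      · positivity
    simp only [hpdef]; nlinarith
  have hsum : r ≤ g + p := by
    calc r = r / 2 + r / 2 := by ring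
    _ ≤ g + p := add_le_add hg hp
  have key : (g - p) * (g + p) =
      s * (1 - s ^ 2) * x ^ 3 / r - (1 - s ^ 2) ^ 2 * x ^ 4 / (4 * r ^ 2) := by
    have : (g - p) * (g + p) = g ^ 2 - p ^ 2 := by ring
    rw [this, hg2, hpdef]
    field_simp
    ring
  have habs : |g - p| * (g + p) = |(g - p) * (g + p)| := by
    rw [abs_mul, abs_of_nonneg (by linarith : (0:ℝ) ≤ g + p)]
  have hx3 : |x| ^ 3 = |x ^ 3| := by rw [abs_pow]
  have hx4 : x ^ 4 = |x| ^ 4 := by rw [← abs_pow]; exact (abs_of_nonneg (by positivity)).symm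
  have hbound : |(g - p) * (g + p)| ≤ 2 * |x| ^ 3 / r := by
    rw [key]
    have h1 : |s * (1 - s ^ 2) * x ^ 3 / r - (1 - s ^ 2) ^ 2 * x ^ 4 / (4 * r ^ 2)|
        ≤ |s * (1 - s ^ 2) * x ^ 3 / r| + |(1 - s ^ 2) ^ 2 * x ^ 4 / (4 * r ^ 2)| :=
      abs_sub _ _
    have hc1 : |1 - s ^ 2| ≤ 1 := by
      rw [abs_of_nonneg (by nlinarith : (0:ℝ) ≤ 1 - s ^ 2)]
      nlinarith [sq_nonneg s]
    have h2 : |s * (1 - s ^ 2) * x ^ 3 / r| ≤ |x| ^ 3 / r := by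
      rw [abs_div, abs_of_pos hr, hx3]
      refine div_le_div_of_nonneg_right ?_ hr.le
      rw [abs_mul, abs_mul]
      have h5 : |s| * |1 - s ^ 2| ≤ 1 := by
        nlinarith [abs_nonneg s, abs_nonneg (1 - s ^ 2)]
      calc |s| * |1 - s ^ 2| * |x ^ 3| ≤ 1 * |x ^ 3| :=
        mul_le_mul_of_nonneg_right h5 (abs_nonneg _)
      _ = |x ^ 3| := one_mul _
    have h3 : |(1 - s ^ 2) ^ 2 * x ^ 4 / (4 * r ^ 2)| ≤ |x| ^ 3 / r := by
      rw [abs_div, abs_of_pos (by positivity : (0:ℝ) < 4 * r ^ 2), abs_mul]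
      rw [abs_of_nonneg (by positivity : (0:ℝ) ≤ x ^ 4), hx4]
      have hc : |(1 - s ^ 2) ^ 2| ≤ 1 := by
        rw [abs_of_nonneg (by positivity : (0:ℝ) ≤ (1 - s ^ 2) ^ 2)]
        nlinarith
      rw [div_le_div_iff₀ (by positivity) hr]
      have h4 : |x| ^ 4 ≤ |x| ^ 3 * (r / 2) := by
        have h40 : |x| ^ 4 = |x| ^ 3 * |x| := by ring
        rw [h40]
        exact mul_le_mul_of_nonneg_left hx (by positivity)
      have h6 : |(1 - s ^ 2) ^ 2| * |x| ^ 4 ≤ 1 * (|x| ^ 3 * (r / 2)) :=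
        mul_le_mul hc h4 (by positivity) one_pos.le
      nlinarith [pow_nonneg (abs_nonneg x) 3]
    calc _ ≤ _ := h1
    _ ≤ |x| ^ 3 / r + |x| ^ 3 / r := add_le_add h2 h3
    _ = 2 * |x| ^ 3 / r := by ring
  have hstep : |g - p| * r ≤ 2 * |x| ^ 3 / r := by
    calc |g - p| * r ≤ |g - p| * (g + p) :=
      mul_le_mul_of_nonneg_left hsum (abs_nonneg _)
    _ = |(g - p) * (g + p)| := habs
    _ ≤ 2 * |x| ^ 3 / r := hbound
  have hfin : |g - p| * r ^ 2 ≤ 2 * |x| ^ 3 := by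
    have h := mul_le_mul_of_nonneg_right hstep (le_of_lt hr)
    rw [div_mul_cancel₀ _ (ne_of_gt hr)] at h
    nlinarith
  rw [le_div_iff₀ (by positivity : (0:ℝ) < r ^ 2)]
  linarith
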